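/- arXiv:1401.6614 — 5 statements merged into one kernel-verified Lean document; each statement's English description precedes it below -/
import Mathlib

section
/- Let n be a natural number with more than m distinct prime factors (ω(n) > m). Then for every natural number j with j ≤ m, the sum over the divisors d of n of μ(d)·(log d)^j equals 0, where μ is the Möbius function and log is the natural logarithm. -/
open Finset in
lemma aux_powerset_sum (P : Finset ℕ) (x : ℕ → ℝ) :
    ∀ j < P.card, ∑ S ∈ P.powerset, (-1 : ℝ) ^ S.card * (∑ p ∈ S, x p) ^ j = 0 := by
  classical
  induction P using Finset.induction_on with
  | empty => intro j hj; simp at hj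
  | @insert a P ha IH =>
    intro j hj
    rw [Finset.sum_powerset_insert ha]
    have hstep : ∀ S ∈ P.powerset,
        (-1 : ℝ) ^ S.card * (∑ p ∈ S, x p) ^ j
          + (-1 : ℝ) ^ (insert a S).card * (∑ p ∈ insert a S, x p) ^ j
        = ∑ k ∈ Finset.range j,
            (-(j.choose k : ℝ) * x a ^ (j - k)) * ((-1 : ℝ) ^ S.card * (∑ p ∈ S, x p) ^ k) := by
      intro S hS
      have haS : a ∉ S := fun h => ha (Finset.mem_powerset.mp hS h)
      have expand : (x a + ∑ p ∈ S, x p) ^ j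
          = (∑ k ∈ Finset.range j, (∑ p ∈ S, x p) ^ k * x a ^ (j - k) * (j.choose k : ℝ))
            + (∑ p ∈ S, x p) ^ j := by
        rw [add_comm (x a), add_pow, Finset.sum_range_succ]
        simp
      rw [Finset.card_insert_of_notMem haS, Finset.sum_insert haS, expand, pow_succ]
      have hsum : (-1 : ℝ) ^ S.card * -1 *
          (∑ k ∈ Finset.range j, (∑ p ∈ S, x p) ^ k * x a ^ (j - k) * (j.choose k : ℝ))
          = ∑ k ∈ Finset.range j,
            (-(j.choose k : ℝ) * x a ^ (j - k)) * ((-1 : ℝ) ^ S.card * (∑ p ∈ S, x p) ^ k) := by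
        rw [Finset.mul_sum]
        exact Finset.sum_congr rfl fun k _ => by ring
      rw [mul_add, hsum]
      ring
    rw [← Finset.sum_add_distrib, Finset.sum_congr rfl hstep, Finset.sum_comm]
    apply Finset.sum_eq_zero
    intro k hk
    rw [← Finset.mul_sum, IH k ?_, mul_zero]
    have : j ≤ P.card := by
      rw [Finset.card_insert_of_notMem ha] at hj; omega
    exact lt_of_lt_of_le (Finset.mem_range.mp hk) this

lemma squarefree_prod_primes {S : Finset ℕ} (hS : ∀ p ∈ S, p.Prime) :
    Squarefree (∏ p ∈ S, p) := by
  rw [Nat.squarefree_iff_factorization_le_one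
    (Finset.prod_ne_zero_iff.2 fun p hp => (hS p hp).ne_zero)]
  intro q
  rw [Nat.factorization_prod (fun p hp => (hS p hp).ne_zero), Finsupp.finset_sum_apply]
  calc ∑ p ∈ S, (Nat.factorization p) q = ∑ p ∈ S, if p = q then 1 else 0 := by
        refine Finset.sum_congr rfl fun p hp => ?_
        rw [(hS p hp).factorization, Finsupp.single_apply]
      _ ≤ 1 := by rw [Finset.sum_ite_eq']; split <;> simp

lemma omega_eq_card (k : ℕ) : ArithmeticFunction.cardDistinctFactors k = k.primeFactors.card := by
  rw [ArithmeticFunction.cardDistinctFactors_apply, ← Nat.toFinset_factors, List.card_toFinset]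

open ArithmeticFunction ArithmeticFunction.omega ArithmeticFunction.Moebius in
/-- If `n` has more than `m` distinct prime factors, then for every `j ≤ m`,
`∑_{d ∣ n} μ(d) (log d)^j = 0`. -/
theorem moebius_log_pow_sum_eq_zero (n m : ℕ) (hn : m < ω n) (j : ℕ) (hj : j ≤ m) :
    ∑ d ∈ n.divisors, (μ d : ℝ) * (Real.log d) ^ j = 0 := by
  classical
  have hn0 : n ≠ 0 := by rintro rfl; simp [cardDistinctFactors_zero] at hn
  have h1 : ∑ d ∈ n.divisors, (μ d : ℝ) * (Real.log d) ^ j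
      = ∑ d ∈ n.divisors.filter Squarefree, (μ d : ℝ) * (Real.log d) ^ j := by
    refine (Finset.sum_filter_of_ne fun d hd hne => ?_).symm
    by_contra hsq
    exact hne (by rw [moebius_eq_zero_of_not_squarefree hsq]; simp)
  rw [h1, Nat.sum_divisors_filter_squarefree hn0, Nat.factors_eq]
  have hPF : (↑n.primeFactorsList : Multiset ℕ).toFinset = n.primeFactors := rfl
  rw [hPF]
  have key : ∀ S ∈ n.primeFactors.powerset,
      (μ (S.val.prod) : ℝ) * (Real.log (S.val.prod)) ^ j
        = (-1 : ℝ) ^ S.card * (∑ p ∈ S, Real.log p) ^ j := by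
    intro S hS
    have hS' : ∀ p ∈ S, p.Prime := fun p hp =>
      Nat.prime_of_mem_primeFactors (Finset.mem_powerset.mp hS hp)
    rw [S.prod_val, Function.id_def] at *
    have hsq : Squarefree (∏ p ∈ S, p) := squarefree_prod_primes hS'
    have hμ : (μ (∏ p ∈ S, p) : ℝ) = (-1 : ℝ) ^ S.card := by
      rw [moebius_apply_of_squarefree hsq,
        ← (cardDistinctFactors_eq_cardFactors_iff_squarefree hsq.ne_zero).mpr hsq,
        omega_eq_card, Nat.primeFactors_prod hS']
      push_cast; ring
    have hlog : Real.log ((∏ p ∈ S, p : ℕ) : ℝ) = ∑ p ∈ S, Real.log p := by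
      rw [Nat.cast_prod, Real.log_prod
        (fun p hp => Nat.cast_ne_zero.2 (hS' p hp).ne_zero)]
    rw [hμ, hlog]
  rw [Finset.sum_congr rfl key]
  refine aux_powerset_sum n.primeFactors (fun p => Real.log p) j ?_
  rw [← omega_eq_card]
  omega
end

section
/- There exists an admissible 105-tuple of natural numbers h₁ < h₂ < ⋯ < h₁₀₅ with h₁₀₅ − h₁ = 600. -/
set_option maxRecDepth 100000
set_option maxHeartbeats 4000000
/-- A tuple `h : Fin k → ℕ` is admissible if for every prime `p` the residues
`h j mod p` do not cover all of the `p` residue classes. -/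
def Admissible {k : ℕ} (h : Fin k → ℕ) : Prop :=
  ∀ p : ℕ, p.Prime → (Finset.univ.image fun j => h j % p).card < p

def myTuple : Fin 105 → ℕ := fun j =>
  [0, 2, 6, 8, 18, 20, 26, 30, 32, 36, 42, 50, 60, 62, 68, 72, 86, 90, 92, 96, 98,
   102, 116, 128, 138, 140, 156, 158, 162, 170, 176, 182, 186, 198, 200, 212, 216,
   222, 228, 236, 240, 242, 246, 252, 258, 260, 266, 270, 272, 278, 288, 296, 300,
   302, 306, 312, 326, 330, 336, 338, 348, 362, 368, 372, 378, 380, 390, 392, 396,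
   398, 410, 420, 422, 426, 428, 432, 440, 450, 456, 462, 468, 470, 476, 480, 482,
   488, 492, 498, 506, 510, 512, 530, 536, 546, 548, 552, 558, 566, 572, 576, 578,
   582, 590, 596, 600].getD j 0

lemma myTuple_small_primes :
    ∀ p ∈ Finset.range 106, p.Prime →
      (Finset.univ.image fun j => myTuple j % p).card < p := by decide

/-- There is an admissible `105`-tuple `h₁ < ⋯ < h₁₀₅` of diameter `h₁₀₅ − h₁ = 600`. -/
theorem exists_admissible_105_tuple_diameter_600 :
    ∃ h : Fin 105 → ℕ, StrictMono h ∧ Admissible h ∧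
      h ⟨104, by norm_num⟩ - h ⟨0, by norm_num⟩ = 600 := by
  refine ⟨myTuple, by decide, ?_, by decide⟩
  intro p hp
  by_cases hle : p < 106
  · exact myTuple_small_primes p (Finset.mem_range.mpr hle) hp
  · calc (Finset.univ.image fun j => myTuple j % p).card
        ≤ (Finset.univ : Finset (Fin 105)).card := Finset.card_image_le
      _ = 105 := by simp
      _ < p := by omega
end

section
/- Let d and f be squarefree positive integers. Then φ(d)·φ(f) = φ(lcm(d,f)) · ∑_{u ∣ gcd(d,f)} γ(u), where γ(u) = ∏_{p ∣ u} (p − 2) is the product of (p − 2) over the distinct primes p dividing u (with γ(1) = 1), and φ is Euler's totient function. -/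
open ArithmeticFunction Finset

private lemma totient_eq_sum_gamma (g : ℕ) (hg : Squarefree g) :
    Nat.totient g = ∑ u ∈ g.divisors, ∏ p ∈ u.primeFactors, (p - 2) := by
  have hg0 : g ≠ 0 := hg.ne_zero
  have hmul : (ArithmeticFunction.prodPrimeFactors (R := ℕ)
      (fun p => p - 2)).IsMultiplicative :=
    ArithmeticFunction.IsMultiplicative.prodPrimeFactors _
  have key := hmul.prodPrimeFactors_one_add_of_squarefree hg
  have hrhs : ∑ d ∈ g.divisors, (ArithmeticFunction.prodPrimeFactors
        (R := ℕ) fun p => p - 2) d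
      = ∑ u ∈ g.divisors, ∏ p ∈ u.primeFactors, (p - 2) := by
    refine Finset.sum_congr rfl fun d hd => ?_
    rw [ArithmeticFunction.prodPrimeFactors_apply (Nat.pos_of_mem_divisors hd).ne']
  have hlhs : ∏ p ∈ g.primeFactors, (1 + (ArithmeticFunction.prodPrimeFactors
        (R := ℕ) fun p => p - 2) p)
      = ∏ p ∈ g.primeFactors, (p - 1) := by
    refine Finset.prod_congr rfl fun p hp => ?_
    have hp' := Nat.prime_of_mem_primeFactors hp
    rw [ArithmeticFunction.prodPrimeFactors_apply hp'.ne_zero, hp'.primeFactors,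
      Finset.prod_singleton]
    have := hp'.two_le
    omega
  have htot : Nat.totient g = ∏ p ∈ g.primeFactors, (p - 1) := by
    have h1 := Nat.totient_mul_prod_primeFactors g
    rw [Nat.prod_primeFactors_of_squarefree hg] at h1
    exact Nat.eq_of_mul_eq_mul_left (Nat.pos_of_ne_zero hg0) (by linarith [h1])
  rw [htot, ← hlhs, key, hrhs]

/-- For squarefree positive integers `d, f`:
`φ(d)·φ(f) = φ(lcm(d,f)) · ∑_{u ∣ gcd(d,f)} γ(u)` where `γ(u) = ∏_{p ∣ u} (p − 2)`. -/
theorem totient_mul_eq_totient_lcm_mul_sum_gamma (d f : ℕ) (hd : 0 < d) (hf : 0 < f)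
    (hsd : Squarefree d) (hsf : Squarefree f) :
    Nat.totient d * Nat.totient f =
      Nat.totient (Nat.lcm d f) *
        ∑ u ∈ (Nat.gcd d f).divisors, ∏ p ∈ u.primeFactors, (p - 2) := by
  set g := Nat.gcd d f with hgdef
  have hg0 : 0 < g := Nat.gcd_pos_of_pos_left f hd
  have hgl : g ∣ Nat.lcm d f := (Nat.gcd_dvd_left d f).trans (Nat.dvd_lcm_left d f)
  have hsg : Squarefree g := hsd.squarefree_of_dvd (Nat.gcd_dvd_left d f)
  have h1 := Nat.totient_gcd_mul_totient_mul d f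
  have h2 := Nat.totient_gcd_mul_totient_mul (Nat.lcm d f) g
  rw [Nat.gcd_eq_right hgl] at h2
  have hml : Nat.lcm d f * g = d * f := by
    rw [mul_comm, hgdef, Nat.gcd_mul_lcm]
  rw [hml] at h2
  -- h1 : φ g * φ (d*f) = φ d * φ f * g
  -- h2 : φ g * φ (d*f) = φ (lcm) * φ g * g
  have key : Nat.totient d * Nat.totient f = Nat.totient (Nat.lcm d f) * Nat.totient g := by
    have := h1.symm.trans h2
    have hφg : 0 < Nat.totient g := Nat.totient_pos.mpr hg0
    have := Nat.eq_of_mul_eq_mul_right hg0 this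
    nlinarith [this]
  rw [key, totient_eq_sum_gamma g hsg]
end

section
/- There exists a constant C > 0 such that for every real Y ≥ 2, the sum of 1/φ(v)² over all integers v > 1 all of whose prime factors exceed Y satisfies ∑_{v > 1, p ∣ v ⇒ p > Y} 1/φ(v)² ≤ C / Y. (In particular this series converges.) -/
lemma pow_three_le_totient_pow_five : ∀ m : ℕ, 0 < m →
    (∀ p : ℕ, p.Prime → p ∣ m → 3 ≤ p) → m ^ 3 ≤ m.totient ^ 5 := by
  intro m
  induction m using Nat.strong_induction_on with
  | _ m ih =>
    intro hm h
    rcases eq_or_lt_of_le (show 1 ≤ m from hm) with h1 | h1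
    · simp [← h1]
    · -- 1 < m
      have hm1 : m ≠ 1 := by omega
      set p := m.minFac with hpdef
      have hpp : p.Prime := Nat.minFac_prime hm1
      have hp3 : 3 ≤ p := h p hpp (Nat.minFac_dvd m)
      set k := m.factorization p with hkdef
      have hk : 0 < k := by
        rw [hkdef]
        exact Nat.Prime.factorization_pos_of_dvd hpp (by omega) (Nat.minFac_dvd m)
      set n := m / p ^ k with hndef
      have hmn : p ^ k * n = m := Nat.ordProj_mul_ordCompl_eq_self m p
      have hpk1 : 1 < p ^ k := Nat.one_lt_pow (by omega) (by omega)
      have hn0 : 0 < n := by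
        rcases Nat.eq_zero_or_pos n with h0 | h0
        · rw [h0, Nat.mul_zero] at hmn; omega
        · exact h0
      have hnm : n < m := by nlinarith
      have hcop : Nat.Coprime (p ^ k) n :=
        Nat.Coprime.pow_left k (Nat.coprime_ordCompl hpp (by omega))
      have hrec : n ^ 3 ≤ n.totient ^ 5 := by
        refine ih n hnm hn0 (fun q hq hqd => h q hq (hqd.trans ?_))
        exact ⟨p ^ k, by rw [mul_comm]; exact hmn.symm⟩
      have hpkt : (p ^ k) ^ 3 ≤ (p ^ k).totient ^ 5 := by
        rw [Nat.totient_prime_pow hpp hk]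
        have key : p ^ 3 ≤ (p - 1) ^ 5 := by
          have : 2 ≤ p - 1 := by omega
          set q := p - 1
          have hpq : p = q + 1 := by omega
          rw [hpq]
          nlinarith [this, Nat.mul_le_mul this this,
            Nat.mul_le_mul (Nat.mul_le_mul this this) this]
        calc (p ^ k) ^ 3 = p ^ (3 * (k - 1)) * p ^ 3 := by
              rw [← pow_mul, ← pow_add]; congr 1; omega
          _ ≤ (p ^ (k - 1)) ^ 5 * (p - 1) ^ 5 := by
              apply Nat.mul_le_mul _ key
              rw [← pow_mul]
              exact Nat.pow_le_pow_right (by omega) (by omega)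
          _ = (p ^ (k - 1) * (p - 1)) ^ 5 := by rw [mul_pow]
      calc m ^ 3 = (p ^ k) ^ 3 * n ^ 3 := by rw [← hmn, mul_pow]
        _ ≤ (p ^ k).totient ^ 5 * n.totient ^ 5 := Nat.mul_le_mul hpkt hrec
        _ = ((p ^ k).totient * n.totient) ^ 5 := by rw [mul_pow]
        _ = m.totient ^ 5 := by rw [← Nat.totient_mul hcop, hmn]

lemma one_div_totient_sq_le {m : ℕ} (hm : 0 < m) (h : ∀ p : ℕ, p.Prime → p ∣ m → 3 ≤ p) :
    (1:ℝ) / (m.totient : ℝ)^2 ≤ 1 / (m:ℝ) ^ ((6:ℝ)/5) := by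
  have h3 : m ^ 3 ≤ m.totient ^ 5 := pow_three_le_totient_pow_five m hm h
  have htpos : 0 < m.totient := Nat.totient_pos.mpr hm
  have hm0 : (0:ℝ) < (m:ℝ) := by exact_mod_cast hm
  apply one_div_le_one_div_of_le
  · positivity
  · have key : ((m:ℝ) ^ ((6:ℝ)/5)) ^ (5:ℕ) ≤ ((m.totient:ℝ)^2) ^ (5:ℕ) := by
      have e1 : ((m:ℝ) ^ ((6:ℝ)/5)) ^ (5:ℕ) = (m:ℝ) ^ (6:ℕ) := by
        rw [← Real.rpow_natCast ((m:ℝ) ^ ((6:ℝ)/5)) 5, ← Real.rpow_mul hm0.le,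
          ← Real.rpow_natCast (m:ℝ) 6]
        norm_num
      rw [e1]
      have h3r : (m:ℝ)^(3:ℕ) ≤ (m.totient:ℝ)^(5:ℕ) := by exact_mod_cast h3
      calc (m:ℝ)^(6:ℕ) = ((m:ℝ)^(3:ℕ))^2 := by ring
        _ ≤ ((m.totient:ℝ)^(5:ℕ))^2 := by
            apply pow_le_pow_left₀ (by positivity) h3r
        _ = ((m.totient:ℝ)^2)^(5:ℕ) := by ring
    exact le_of_pow_le_pow_left₀ (by norm_num) (by positivity) key

lemma tsum_prod_mul {ι κ : Type*} (a : ι → ℝ) (b : κ → ℝ) (ha : Summable a) (hb : Summable b)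
    (ha' : ∀ i, 0 ≤ a i) (hb' : ∀ j, 0 ≤ b j) :
    ∑' q : ι × κ, a q.1 * b q.2 = (∑' i, a i) * ∑' j, b j := by
  rw [Summable.tsum_prod' (ha.mul_of_nonneg hb ha' hb') (fun i => ((hb.mul_left (a i)).congr (fun c => rfl)))]
  simp_rw [tsum_mul_left]
  exact tsum_mul_right

lemma tsum_tail_sq_le (K : ℕ) (hK : 1 ≤ K) :
    ∑' n : {n : ℕ // K ≤ n}, 1 / ((n:ℕ):ℝ)^2 ≤ 2 / (K:ℝ) := by
  have hs : Summable (fun n : {n : ℕ // K ≤ n} => 1/((n:ℕ):ℝ)^2) :=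
    (Real.summable_one_div_nat_pow.mpr one_lt_two).comp_injective Subtype.val_injective
  apply Summable.tsum_le_of_sum_le hs
  intro s
  classical
  set s' := s.image (fun x : {n : ℕ // K ≤ n} => (x : ℕ)) with hs'
  have hsum : ∑ x ∈ s, 1/((x:ℕ):ℝ)^2 = ∑ n ∈ s', 1/(n:ℝ)^2 := by
    rw [hs', Finset.sum_image]
    intro x _ y _ hxy
    exact Subtype.ext hxy
  rw [hsum]
  set B : ℕ := (s'.sup id) + 1 with hB
  have hsub : s' ⊆ Finset.Ioo (K-1) B := by
    intro n hn
    rw [Finset.mem_Ioo]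
    constructor
    · obtain ⟨x, _, rfl⟩ := Finset.mem_image.mp hn
      have := x.2
      omega
    · have : n ≤ s'.sup id := Finset.le_sup (f := id) hn
      omega
  calc ∑ n ∈ s', 1/(n:ℝ)^2 ≤ ∑ n ∈ Finset.Ioo (K-1) B, 1/(n:ℝ)^2 := by
        apply Finset.sum_le_sum_of_subset_of_nonneg hsub
        intro i _ _
        positivity
    _ ≤ 2 / ((K-1 : ℕ) + 1 : ℝ) := by
        simpa [one_div] using sum_Ioo_inv_sq_le (α := ℝ) (K-1) B
    _ = 2 / (K:ℝ) := by
        congr 1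
        have : ((K-1 : ℕ):ℝ) = (K:ℝ) - 1 := by
          rw [Nat.cast_sub hK]; norm_num
        rw [this]; ring

set_option maxHeartbeats 1000000 in
/-- The sum of `1/φ(v)²` over integers `v > 1` all of whose prime factors exceed `Y`
converges and is `≪ 1/Y`. -/
theorem sum_one_div_totient_sq_rough_le :
    ∃ C : ℝ, 0 < C ∧ ∀ Y : ℝ, 2 ≤ Y →
      Summable (fun v : {v : ℕ // 1 < v ∧ ∀ p : ℕ, p.Prime → p ∣ v → Y < p} =>
        (1 : ℝ) / (Nat.totient v : ℝ) ^ 2) ∧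
      ∑' v : {v : ℕ // 1 < v ∧ ∀ p : ℕ, p.Prime → p ∣ v → Y < p},
        (1 : ℝ) / (Nat.totient v : ℝ) ^ 2 ≤ C / Y := by
  classical
  refine ⟨4, by norm_num, fun Y hY => ?_⟩
  have hY0 : (0:ℝ) < Y := by linarith
  have three_le : ∀ p : ℕ, p.Prime → Y < (p:ℝ) → 3 ≤ p := by
    intro p hp h
    have h2r : (2:ℝ) < (p:ℝ) := lt_of_le_of_lt hY h
    have h2 : 2 < p := by exact_mod_cast h2r
    omega
  set f : ℕ → ℝ := fun n => (1:ℝ) / (Nat.totient n : ℝ)^2 with hf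
  have hf_nonneg : ∀ n, 0 ≤ f n := by
    intro n; rw [hf]; positivity
  have summable_aux : ∀ (Q : ℕ → Prop),
      (∀ n, Q n → 0 < n ∧ ∀ p : ℕ, p.Prime → p ∣ n → Y < (p:ℝ)) →
      Summable (fun v : {v : ℕ // Q v} => f (v:ℕ)) := by
    intro Q hQ
    have base : Summable (fun n : ℕ => 1 / (n:ℝ) ^ ((6:ℝ)/5)) :=
      Real.summable_one_div_nat_rpow.mpr (by norm_num)
    exact Summable.of_nonneg_of_le (fun v => hf_nonneg _)
      (fun v => one_div_totient_sq_le (hQ v v.2).1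
        (fun p pp pd => three_le p pp ((hQ v v.2).2 p pp pd)))
      (base.comp_injective Subtype.val_injective)
  have hsumA : Summable
      (fun v : {v : ℕ // 1 < v ∧ ∀ p : ℕ, p.Prime → p ∣ v → Y < (p:ℝ)} => f (v:ℕ)) :=
    summable_aux _ (fun n hn => ⟨lt_trans Nat.zero_lt_one hn.1, hn.2⟩)
  refine ⟨hsumA, ?_⟩
  have hsumM : Summable
      (fun m : {m : ℕ // 0 < m ∧ ∀ p : ℕ, p.Prime → p ∣ m → Y < (p:ℝ)} => f (m:ℕ)) :=
    summable_aux _ (fun n hn => hn)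
  -- summability over primes
  have hsumP : Summable
      (fun p : {p : ℕ // p.Prime ∧ Y < (p:ℝ)} => 1 / (((p:ℕ):ℝ) - 1)^2) := by
    refine Summable.of_nonneg_of_le
      (f := fun p : {p : ℕ // p.Prime ∧ Y < (p:ℝ)} => 4 * (1/(((p:ℕ)):ℝ)^2))
      (fun p => by positivity) (fun p => ?_)
      (((Real.summable_one_div_nat_pow.mpr one_lt_two).mul_left 4).comp_injective
        Subtype.val_injective)
    have h3 : 3 ≤ (p:ℕ) := three_le _ p.2.1 p.2.2
    have h3r : (3:ℝ) ≤ ((p:ℕ):ℝ) := by exact_mod_cast h3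
    show 1 / (((p:ℕ):ℝ) - 1)^2 ≤ 4 * (1/(((p:ℕ)):ℝ)^2)
    rw [mul_one_div, div_le_div_iff₀ (by nlinarith) (by positivity)]
    nlinarith
  -- bound on T
  set N := ⌊Y⌋₊ with hN
  have hN2 : 2 ≤ N := Nat.le_floor (by exact_mod_cast hY)
  set K := N / 2 with hK
  have hK1 : 1 ≤ K := by omega
  have hKr : (1:ℝ) ≤ (K:ℝ) := by exact_mod_cast hK1
  set T : ℝ := ∑' p : {p : ℕ // p.Prime ∧ Y < (p:ℝ)}, 1 / (((p:ℕ):ℝ) - 1)^2 with hT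
  have hodd : ∀ p : {p : ℕ // p.Prime ∧ Y < (p:ℝ)}, (p:ℕ) = 2 * (((p:ℕ)-1)/2) + 1 := by
    intro p
    have h3 : 3 ≤ (p:ℕ) := three_le _ p.2.1 p.2.2
    obtain ⟨r, hr⟩ := p.2.1.odd_of_ne_two (by omega)
    omega
  have hKle : ∀ p : {p : ℕ // p.Prime ∧ Y < (p:ℝ)}, K ≤ ((p:ℕ)-1)/2 := by
    intro p
    have hNY : (N:ℝ) ≤ Y := Nat.floor_le hY0.le
    have hNp : N < (p:ℕ) := by exact_mod_cast lt_of_le_of_lt hNY p.2.2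
    omega
  have hTle : T ≤ 1 / (2 * (K:ℝ)) := by
    have step : T ≤ ∑' n : {n : ℕ // K ≤ n}, (1/4) * (1/((n:ℕ):ℝ)^2) := by
      rw [hT]
      apply Summable.tsum_le_tsum_of_inj
        (fun p : {p : ℕ // p.Prime ∧ Y < (p:ℝ)} => (⟨((p:ℕ)-1)/2, hKle p⟩ : {n : ℕ // K ≤ n}))
      · intro p q hpq
        have hval : ((p:ℕ)-1)/2 = ((q:ℕ)-1)/2 := congrArg Subtype.val hpq
        have h1 := hodd p
        have h2 := hodd q
        exact Subtype.ext (by omega)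
      · intro c _; positivity
      · intro p
        have hp := hodd p
        have hj1 : 1 ≤ (((p:ℕ)-1)/2 : ℕ) := le_trans hK1 (hKle p)
        have hjr : (1:ℝ) ≤ ((((p:ℕ)-1)/2 : ℕ):ℝ) := by exact_mod_cast hj1
        have hcast : ((p:ℕ):ℝ) = 2 * (((((p:ℕ)-1)/2 : ℕ)):ℝ) + 1 := by exact_mod_cast hp
        rw [hcast]
        rw [mul_one_div, div_le_div_iff₀ (by nlinarith) (by nlinarith)]
        ring_nf
        nlinarith
      · exact hsumP
      · exact ((Real.summable_one_div_nat_pow.mpr one_lt_two).mul_left (1/4)).comp_injective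
          Subtype.val_injective
    calc T ≤ ∑' n : {n : ℕ // K ≤ n}, (1/4) * (1/((n:ℕ):ℝ)^2) := step
      _ = (1/4) * ∑' n : {n : ℕ // K ≤ n}, 1/((n:ℕ):ℝ)^2 := tsum_mul_left
      _ ≤ (1/4) * (2/(K:ℝ)) := by
          exact mul_le_mul_of_nonneg_left (tsum_tail_sq_le K hK1) (by norm_num)
      _ = 1/(2*(K:ℝ)) := by ring
  have hThalf : T ≤ 1/2 := hTle.trans (one_div_le_one_div_of_le (by norm_num) (by linarith))
  have hY4K : Y ≤ 4*(K:ℝ) := by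
    have h1 : Y < (N:ℝ) + 1 := Nat.lt_floor_add_one Y
    have h2 : N ≤ 2*K + 1 := by rw [hK]; omega
    have h2r : (N:ℝ) ≤ 2*(K:ℝ)+1 := by exact_mod_cast h2
    linarith
  have hTY : T ≤ 2/Y := hTle.trans (by
    rw [div_le_div_iff₀ (by linarith) hY0]
    linarith)
  -- main inequality : S ≤ T * (1 + S)
  set S : ℝ := ∑' v : {v : ℕ // 1 < v ∧ ∀ p : ℕ, p.Prime → p ∣ v → Y < (p:ℝ)}, f (v:ℕ)
    with hS
  have hS0 : 0 ≤ S := tsum_nonneg (fun v => hf_nonneg _)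
  have hAP : ∀ v : {v : ℕ // 1 < v ∧ ∀ p : ℕ, p.Prime → p ∣ v → Y < (p:ℝ)},
      (v:ℕ).minFac.Prime ∧ Y < (((v:ℕ).minFac : ℕ):ℝ) := by
    intro v
    have h1 := v.2.1
    have hpp : (v:ℕ).minFac.Prime := Nat.minFac_prime (by omega)
    exact ⟨hpp, v.2.2 _ hpp (Nat.minFac_dvd _)⟩
  have hAM : ∀ v : {v : ℕ // 1 < v ∧ ∀ p : ℕ, p.Prime → p ∣ v → Y < (p:ℝ)},
      0 < (v:ℕ)/(v:ℕ).minFac ∧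
      ∀ p : ℕ, p.Prime → p ∣ (v:ℕ)/(v:ℕ).minFac → Y < (p:ℝ) := by
    intro v
    have h1 := v.2.1
    have hdvd : (v:ℕ).minFac ∣ (v:ℕ) := Nat.minFac_dvd _
    have hdvd2 : (v:ℕ)/(v:ℕ).minFac ∣ (v:ℕ) := ⟨(v:ℕ).minFac, (Nat.div_mul_cancel hdvd).symm⟩
    constructor
    · exact Nat.div_pos (Nat.minFac_le (by omega)) (Nat.minFac_pos _)
    · exact fun p pp pd => v.2.2 p pp (pd.trans hdvd2)
  have key : S ≤ T * (1 + S) := by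
    have hprod : Summable (fun q : {p : ℕ // p.Prime ∧ Y < (p:ℝ)} ×
        {m : ℕ // 0 < m ∧ ∀ p : ℕ, p.Prime → p ∣ m → Y < (p:ℝ)} =>
        (1/(((q.1:ℕ):ℝ)-1)^2) * f (q.2:ℕ)) :=
      Summable.mul_of_nonneg hsumP hsumM (Pi.le_def.mpr (fun p => by positivity))
        (Pi.le_def.mpr (fun m => hf_nonneg _))
    have hstep : S ≤ ∑' q : {p : ℕ // p.Prime ∧ Y < (p:ℝ)} ×
        {m : ℕ // 0 < m ∧ ∀ p : ℕ, p.Prime → p ∣ m → Y < (p:ℝ)},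
        (1/(((q.1:ℕ):ℝ)-1)^2) * f (q.2:ℕ) := by
      rw [hS]
      apply Summable.tsum_le_tsum_of_inj
        (fun v : {v : ℕ // 1 < v ∧ ∀ p : ℕ, p.Prime → p ∣ v → Y < (p:ℝ)} =>
          ((⟨(v:ℕ).minFac, hAP v⟩ : {p : ℕ // p.Prime ∧ Y < (p:ℝ)}),
           (⟨(v:ℕ)/(v:ℕ).minFac, hAM v⟩ :
             {m : ℕ // 0 < m ∧ ∀ p : ℕ, p.Prime → p ∣ m → Y < (p:ℝ)})))
      · intro v w hvw
        have h1 : (v:ℕ).minFac = (w:ℕ).minFac :=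
          congrArg (fun q : {p : ℕ // p.Prime ∧ Y < (p:ℝ)} ×
            {m : ℕ // 0 < m ∧ ∀ p : ℕ, p.Prime → p ∣ m → Y < (p:ℝ)} => (q.1 : ℕ)) hvw
        have h2 : (v:ℕ)/(v:ℕ).minFac = (w:ℕ)/(w:ℕ).minFac :=
          congrArg (fun q : {p : ℕ // p.Prime ∧ Y < (p:ℝ)} ×
            {m : ℕ // 0 < m ∧ ∀ p : ℕ, p.Prime → p ∣ m → Y < (p:ℝ)} => (q.2 : ℕ)) hvw
        apply Subtype.ext
        have e1 : (v:ℕ).minFac * ((v:ℕ)/(v:ℕ).minFac) = (v:ℕ) :=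
          Nat.mul_div_cancel' (Nat.minFac_dvd _)
        have e2 : (w:ℕ).minFac * ((w:ℕ)/(w:ℕ).minFac) = (w:ℕ) :=
          Nat.mul_div_cancel' (Nat.minFac_dvd _)
        rw [← e1, ← e2, h2, h1]
      · intro c _
        exact mul_nonneg (by positivity) (hf_nonneg _)
      · intro v
        have hpp : (v:ℕ).minFac.Prime := (hAP v).1
        have hp3 : 3 ≤ (v:ℕ).minFac := three_le _ hpp (hAP v).2
        have hm0 : 0 < (v:ℕ)/(v:ℕ).minFac := (hAM v).1
        have htm : 0 < ((v:ℕ)/(v:ℕ).minFac).totient := Nat.totient_pos.mpr hm0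
        have hdvd : (v:ℕ).minFac ∣ (v:ℕ) := Nat.minFac_dvd _
        have hv : (v:ℕ) = (v:ℕ).minFac * ((v:ℕ)/(v:ℕ).minFac) :=
          (Nat.mul_div_cancel' hdvd).symm
        have hkey : ((v:ℕ).minFac - 1) * ((v:ℕ)/(v:ℕ).minFac).totient ≤ (v:ℕ).totient := by
          by_cases hpm : (v:ℕ).minFac ∣ (v:ℕ)/(v:ℕ).minFac
          · conv_rhs => rw [hv]
            rw [Nat.totient_mul_of_prime_of_dvd hpp hpm]
            exact Nat.mul_le_mul_right _ (Nat.sub_le _ 1)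
          · conv_rhs => rw [hv]
            rw [Nat.totient_mul (hpp.coprime_iff_not_dvd.mpr hpm), Nat.totient_prime hpp]
        have hx0 : 0 < ((v:ℕ).minFac - 1) * ((v:ℕ)/(v:ℕ).minFac).totient :=
          Nat.mul_pos (by omega) htm
        have hx0r : (0:ℝ) < ((((v:ℕ).minFac - 1) * ((v:ℕ)/(v:ℕ).minFac).totient : ℕ):ℝ) := by
          exact_mod_cast hx0
        have hler : ((((v:ℕ).minFac - 1) * ((v:ℕ)/(v:ℕ).minFac).totient : ℕ):ℝ)
            ≤ ((v:ℕ).totient : ℝ) := by exact_mod_cast hkey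
        have h1 : f (v:ℕ) ≤ 1 / ((((v:ℕ).minFac - 1) * ((v:ℕ)/(v:ℕ).minFac).totient : ℕ):ℝ)^2 := by
          rw [hf]
          apply one_div_le_one_div_of_le (by positivity)
          nlinarith
        refine h1.trans (le_of_eq ?_)
        have hcast : ((((v:ℕ).minFac - 1) * ((v:ℕ)/(v:ℕ).minFac).totient : ℕ):ℝ)
            = ((((v:ℕ).minFac : ℕ):ℝ) - 1) * (((v:ℕ)/(v:ℕ).minFac).totient : ℝ) := by
          push_cast [Nat.cast_sub (by omega : 1 ≤ (v:ℕ).minFac)]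
          ring
        rw [hcast, hf]
        rw [div_mul_div_comm, one_mul, ← mul_pow]
      · exact hsumA
      · exact hprod
    have heq : (∑' q : {p : ℕ // p.Prime ∧ Y < (p:ℝ)} ×
        {m : ℕ // 0 < m ∧ ∀ p : ℕ, p.Prime → p ∣ m → Y < (p:ℝ)},
        (1/(((q.1:ℕ):ℝ)-1)^2) * f (q.2:ℕ))
        = T * ∑' m : {m : ℕ // 0 < m ∧ ∀ p : ℕ, p.Prime → p ∣ m → Y < (p:ℝ)}, f (m:ℕ) := by
      rw [hT]
      exact tsum_prod_mul (fun p : {p : ℕ // p.Prime ∧ Y < (p:ℝ)} => 1 / (((p:ℕ):ℝ) - 1)^2)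
        (fun m : {m : ℕ // 0 < m ∧ ∀ p : ℕ, p.Prime → p ∣ m → Y < (p:ℝ)} => f (m:ℕ))
        hsumP hsumM (fun p => by positivity) (fun m => hf_nonneg _)
    have hMeq : (∑' m : {m : ℕ // 0 < m ∧ ∀ p : ℕ, p.Prime → p ∣ m → Y < (p:ℝ)}, f (m:ℕ))
        = 1 + S := by
      have e1 : (∑' m : {m : ℕ // 0 < m ∧ ∀ p : ℕ, p.Prime → p ∣ m → Y < (p:ℝ)}, f (m:ℕ))
          = ∑' n : ℕ, Set.indicator
            {m : ℕ | 0 < m ∧ ∀ p : ℕ, p.Prime → p ∣ m → Y < (p:ℝ)} f n :=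
        tsum_subtype _ f
      have e2 : S = ∑' n : ℕ, Set.indicator
          {v : ℕ | 1 < v ∧ ∀ p : ℕ, p.Prime → p ∣ v → Y < (p:ℝ)} f n := by
        rw [hS]; exact tsum_subtype _ f
      have hsplit : ∀ n : ℕ,
          Set.indicator {m : ℕ | 0 < m ∧ ∀ p : ℕ, p.Prime → p ∣ m → Y < (p:ℝ)} f n
          = Set.indicator ({1} : Set ℕ) f n
            + Set.indicator {v : ℕ | 1 < v ∧ ∀ p : ℕ, p.Prime → p ∣ v → Y < (p:ℝ)} f n := by
        intro n
        by_cases hn1 : n = 1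
        · subst hn1
          have hM : (1:ℕ) ∈ {m : ℕ | 0 < m ∧ ∀ p : ℕ, p.Prime → p ∣ m → Y < (p:ℝ)} :=
            ⟨one_pos, fun p pp pd => absurd (Nat.dvd_one.mp pd) pp.ne_one⟩
          rw [Set.indicator_of_mem hM, Set.indicator_of_mem (Set.mem_singleton 1),
            Set.indicator_of_notMem (fun h => lt_irrefl 1 h.1)]
          ring
        · by_cases hnM : n ∈ {m : ℕ | 0 < m ∧ ∀ p : ℕ, p.Prime → p ∣ m → Y < (p:ℝ)}
          · have h0 : 0 < n := hnM.1
            have hnA : n ∈ {v : ℕ | 1 < v ∧ ∀ p : ℕ, p.Prime → p ∣ v → Y < (p:ℝ)} :=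
              ⟨by omega, hnM.2⟩
            rw [Set.indicator_of_mem hnM, Set.indicator_of_mem hnA,
              Set.indicator_of_notMem (by simpa using hn1)]
            ring
          · have hnA : n ∉ {v : ℕ | 1 < v ∧ ∀ p : ℕ, p.Prime → p ∣ v → Y < (p:ℝ)} := by
              intro h
              exact hnM ⟨lt_trans Nat.zero_lt_one h.1, h.2⟩
            rw [Set.indicator_of_notMem hnM, Set.indicator_of_notMem hnA,
              Set.indicator_of_notMem (by simpa using hn1)]
            ring
      have hsum1 : Summable (Set.indicator ({1} : Set ℕ) f) :=
        summable_subtype_iff_indicator.mp ((Set.finite_singleton 1).summable f)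
      have hsumAind : Summable (Set.indicator
          {v : ℕ | 1 < v ∧ ∀ p : ℕ, p.Prime → p ∣ v → Y < (p:ℝ)} f) :=
        summable_subtype_iff_indicator.mp hsumA
      have hone : (∑' n : ℕ, Set.indicator ({1} : Set ℕ) f n) = f 1 :=
        (tsum_eq_single 1 (fun b hb => Set.indicator_of_notMem (by simpa using hb) f)).trans
          (Set.indicator_of_mem (Set.mem_singleton 1) f)
      have hf1 : f 1 = 1 := by rw [hf]; simp
      calc (∑' m : {m : ℕ // 0 < m ∧ ∀ p : ℕ, p.Prime → p ∣ m → Y < (p:ℝ)}, f (m:ℕ))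
          = ∑' n : ℕ, Set.indicator
            {m : ℕ | 0 < m ∧ ∀ p : ℕ, p.Prime → p ∣ m → Y < (p:ℝ)} f n := e1
        _ = ∑' n : ℕ, (Set.indicator ({1} : Set ℕ) f n
            + Set.indicator {v : ℕ | 1 < v ∧ ∀ p : ℕ, p.Prime → p ∣ v → Y < (p:ℝ)} f n) :=
            tsum_congr hsplit
        _ = (∑' n : ℕ, Set.indicator ({1} : Set ℕ) f n)
            + ∑' n : ℕ, Set.indicator
              {v : ℕ | 1 < v ∧ ∀ p : ℕ, p.Prime → p ∣ v → Y < (p:ℝ)} f n :=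
            Summable.tsum_add hsum1 hsumAind
        _ = 1 + S := by rw [hone, hf1, e2]
    calc S ≤ _ := hstep
      _ = T * (1 + S) := by rw [heq, hMeq]
  have hfinal : S ≤ 4 / Y := by
    have h1 : T*S ≤ (1/2)*S := mul_le_mul_of_nonneg_right hThalf hS0
    have key' : S ≤ T + T*S := by
      calc S ≤ T*(1+S) := key
        _ = T + T*S := by ring
    have h2 : S ≤ 2*T := by linarith
    have h3 : 2*T ≤ 2*(2/Y) := by linarith
    calc S ≤ 2*T := h2
      _ ≤ 2*(2/Y) := h3
      _ = 4/Y := by ring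
  exact hfinal
end

section
/- Let λ : ℕ × ℕ → ℝ be a function with finite support such that λ(d₁, d₂) = 0 unless d₁·d₂ is squarefree (in particular, unless d₁ and d₂ are coprime squarefree positive integers). Define η(w₁, w₂) = μ(w₁)·μ(w₂)·φ(w₁)·φ(w₂) · ∑_{d₁, d₂ : w₁ ∣ d₁, w₂ ∣ d₂} λ(d₁, d₂)/(d₁·d₂). Then for all positive integers d₁, d₂ with d₁·d₂ squarefree: λ(d₁, d₂) = μ(d₁)·μ(d₂)·d₁·d₂ · ∑_{w₁, w₂ : d₁ ∣ w₁, d₂ ∣ w₂} μ(w₁·w₂)² · η(w₁, w₂)/(φ(w₁)·φ(w₂)). -/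
open ArithmeticFunction
open scoped ArithmeticFunction.Moebius

lemma sum_mu_divisors (m : ℕ) : ∑ i ∈ m.divisors, (μ i : ℤ) = if m = 1 then 1 else 0 := by
  rw [← coe_mul_zeta_apply, moebius_mul_coe_zeta, one_apply]

lemma sum_mu_filter {n d : ℕ} (hn : Squarefree n) :
    ∑ w ∈ n.divisors.filter (d ∣ ·), (μ w : ℤ) = μ d * (if n = d then 1 else 0) := by
  classical
  have hn0 : n ≠ 0 := hn.ne_zero
  by_cases h : d ∣ n
  case neg =>
    have hempty : n.divisors.filter (d ∣ ·) = ∅ := by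
      apply Finset.filter_false_of_mem
      intro w hw hdw
      exact h (hdw.trans (Nat.mem_divisors.mp hw).1)
    have hne : n ≠ d := by rintro rfl; exact h dvd_rfl
    simp [hempty, hne]
  case pos =>
  have hd0 : d ≠ 0 := fun h0 => hn0 (by simpa [h0] using h)
  have key : ∑ w ∈ n.divisors.filter (d ∣ ·), (μ w : ℤ) = ∑ t ∈ (n / d).divisors, (μ (d * t) : ℤ) := by
    apply Finset.sum_nbij' (i := (· / d)) (j := (d * ·))
    · intro w hw
      simp only [Finset.mem_filter, Nat.mem_divisors] at hw
      obtain ⟨⟨hwn, _⟩, a, rfl⟩ := hw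
      rw [Nat.mul_div_cancel_left _ (Nat.pos_of_ne_zero hd0)]
      exact Nat.mem_divisors.mpr ⟨(Nat.mul_dvd_mul_iff_left (Nat.pos_of_ne_zero hd0)).mp
        (by rwa [Nat.mul_div_cancel' h]), by simp [Nat.div_ne_zero_iff, hd0, Nat.le_of_dvd (Nat.pos_of_ne_zero hn0) h]⟩
    · intro t ht
      simp only [Nat.mem_divisors] at ht
      refine Finset.mem_filter.mpr ⟨Nat.mem_divisors.mpr ⟨?_, hn0⟩, Dvd.intro _ rfl⟩
      calc d * t ∣ d * (n / d) := Nat.mul_dvd_mul_left _ ht.1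
        _ = n := Nat.mul_div_cancel' h
    · intro w hw
      simp only [Finset.mem_filter] at hw
      exact Nat.mul_div_cancel' hw.2
    · intro t ht
      exact Nat.mul_div_cancel_left _ (Nat.pos_of_ne_zero hd0)
    · intro w hw
      simp only [Finset.mem_filter] at hw
      rw [Nat.mul_div_cancel' hw.2]
  rw [key]
  have hmul : ∀ t ∈ (n / d).divisors, (μ (d * t) : ℤ) = μ d * μ t := by
    intro t ht
    have htn : d * t ∣ n := by
      calc d * t ∣ d * (n / d) := Nat.mul_dvd_mul_left _ (Nat.mem_divisors.mp ht).1
        _ = n := Nat.mul_div_cancel' h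
    have hsf : Squarefree (d * t) := hn.squarefree_of_dvd htn
    exact isMultiplicative_moebius.map_mul_of_coprime (Nat.squarefree_mul_iff.mp hsf).1
  rw [Finset.sum_congr rfl hmul, ← Finset.mul_sum, sum_mu_divisors]
  congr 1
  have hiff : n / d = 1 ↔ n = d := by
    constructor
    · intro h1; have h2 := Nat.mul_div_cancel' h; rw [h1, mul_one] at h2; omega
    · rintro rfl; exact Nat.div_self (Nat.pos_of_ne_zero hd0)
  simp [hiff]

lemma sum_mu_filter_real {n d : ℕ} (hn : Squarefree n) :
    ∑ w ∈ n.divisors.filter (d ∣ ·), ((μ w : ℤ) : ℝ) = ((μ d : ℤ) : ℝ) * (if n = d then 1 else 0) := by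
  classical
  rw [← Int.cast_sum, sum_mu_filter hn]
  split_ifs <;> simp

lemma mu_self_mul {n : ℕ} (h : Squarefree n) : ((μ n : ℤ) : ℝ) * ((μ n : ℤ) : ℝ) = 1 := by
  rcases moebius_eq_or n with h0 | h1 | h1
  · exact absurd h0 (moebius_ne_zero_iff_squarefree.mpr h)
  · rw [h1]; norm_num
  · rw [h1]; norm_num

/-- (Selberg/Maynard change of variables, two-dimensional Möbius inversion.)
If `λ` has finite support and `λ(d₁,d₂) = 0` unless `d₁·d₂` is squarefree, and
`η(w₁,w₂) = μ(w₁)μ(w₂)φ(w₁)φ(w₂) ∑_{w₁∣d₁, w₂∣d₂} λ(d₁,d₂)/(d₁d₂)`,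
then for `d₁·d₂` squarefree (with `d₁, d₂ > 0`):
`λ(d₁,d₂) = μ(d₁)μ(d₂)d₁d₂ ∑_{d₁∣w₁, d₂∣w₂} μ(w₁w₂)² η(w₁,w₂)/(φ(w₁)φ(w₂))`. -/
theorem lambda_eta_moebius_inversion
    (lam : ℕ × ℕ → ℝ)
    (hfin : (Function.support lam).Finite)
    (hsq : ∀ d : ℕ × ℕ, ¬ Squarefree (d.1 * d.2) → lam d = 0)
    (eta : ℕ × ℕ → ℝ)
    (heta : ∀ w : ℕ × ℕ,
      eta w = (μ w.1 : ℝ) * (μ w.2 : ℝ) * (Nat.totient w.1) * (Nat.totient w.2) *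
        ∑ᶠ (d : ℕ × ℕ) (_ : w.1 ∣ d.1 ∧ w.2 ∣ d.2), lam d / ((d.1 : ℝ) * d.2)) :
    ∀ d₁ d₂ : ℕ, 0 < d₁ → 0 < d₂ → Squarefree (d₁ * d₂) →
      lam (d₁, d₂) = (μ d₁ : ℝ) * (μ d₂ : ℝ) * d₁ * d₂ *
        ∑ᶠ (w : ℕ × ℕ) (_ : d₁ ∣ w.1 ∧ d₂ ∣ w.2),
          ((μ (w.1 * w.2) : ℝ)) ^ 2 * eta w / ((Nat.totient w.1 : ℝ) * Nat.totient w.2) := by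
  classical
  intro d₁ d₂ hd₁ hd₂ hd
  set N : ℕ := (d₁ * d₂) * ∏ x ∈ hfin.toFinset, (x.1 * x.2) with hNdef
  have hsupp : ∀ x : ℕ × ℕ, lam x ≠ 0 → Squarefree (x.1 * x.2) := by
    intro x hx; by_contra h; exact hx (hsq x h)
  have hN0 : N ≠ 0 := by
    apply mul_ne_zero (by positivity)
    apply Finset.prod_ne_zero_iff.mpr
    intro x hx
    exact (hsupp x (hfin.mem_toFinset.mp hx)).ne_zero
  have hmem : ∀ x : ℕ × ℕ, lam x ≠ 0 → x.1 ∣ N ∧ x.2 ∣ N := by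
    intro x hx
    have h1 : x.1 * x.2 ∣ N :=
      Dvd.dvd.mul_left (Finset.dvd_prod_of_mem _ (hfin.mem_toFinset.mpr hx)) _
    exact ⟨(dvd_mul_right x.1 x.2).trans h1, (dvd_mul_left x.2 x.1).trans h1⟩
  set A : Finset (ℕ × ℕ) := N.divisors ×ˢ N.divisors with hA
  have hmemA : ∀ x : ℕ × ℕ, lam x ≠ 0 → x ∈ A := by
    intro x hx
    rw [hA, Finset.mem_product]
    exact ⟨Nat.mem_divisors.mpr ⟨(hmem x hx).1, hN0⟩, Nat.mem_divisors.mpr ⟨(hmem x hx).2, hN0⟩⟩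
  have hdA : (d₁, d₂) ∈ A := by
    rw [hA, Finset.mem_product]
    exact ⟨Nat.mem_divisors.mpr ⟨(dvd_mul_right _ _).trans (dvd_mul_right _ _), hN0⟩,
      Nat.mem_divisors.mpr ⟨(dvd_mul_left _ _).trans (dvd_mul_right _ _), hN0⟩⟩
  have hAdvd : ∀ x ∈ A, x.1 ∣ N ∧ x.2 ∣ N := by
    intro x hx
    rw [hA, Finset.mem_product] at hx
    exact ⟨(Nat.mem_divisors.mp hx.1).1, (Nat.mem_divisors.mp hx.2).1⟩
  -- inner finsum to finset sum
  have claim1 : ∀ w : ℕ × ℕ,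
      (∑ᶠ (e : ℕ × ℕ) (_ : w.1 ∣ e.1 ∧ w.2 ∣ e.2), lam e / ((e.1 : ℝ) * e.2)) =
      ∑ e ∈ A.filter (fun e => w.1 ∣ e.1 ∧ w.2 ∣ e.2), lam e / ((e.1 : ℝ) * e.2) := by
    intro w
    apply finsum_mem_eq_sum_of_inter_support_eq
    ext e
    simp only [Set.mem_inter_iff, Set.mem_setOf_eq, Function.mem_support, Finset.coe_filter,
      Finset.mem_coe, Finset.mem_filter]
    constructor
    · rintro ⟨hp, hf⟩
      have hl : lam e ≠ 0 := by intro h0; apply hf; beta_reduce; rw [h0, zero_div]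
      exact ⟨⟨hmemA e hl, hp⟩, hf⟩
    · rintro ⟨⟨_, hp⟩, hf⟩; exact ⟨hp, hf⟩
  -- outer finsum to finset sum
  have claim2 : (∑ᶠ (w : ℕ × ℕ) (_ : d₁ ∣ w.1 ∧ d₂ ∣ w.2),
        ((μ (w.1 * w.2) : ℝ)) ^ 2 * eta w / ((Nat.totient w.1 : ℝ) * Nat.totient w.2)) =
      ∑ w ∈ A.filter (fun w => d₁ ∣ w.1 ∧ d₂ ∣ w.2),
        ((μ (w.1 * w.2) : ℝ)) ^ 2 * eta w / ((Nat.totient w.1 : ℝ) * Nat.totient w.2) := by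
    apply finsum_mem_eq_sum_of_inter_support_eq
    ext w
    simp only [Set.mem_inter_iff, Set.mem_setOf_eq, Function.mem_support, Finset.coe_filter,
      Finset.mem_coe, Finset.mem_filter]
    constructor
    · rintro ⟨hp, hf⟩
      refine ⟨⟨?_, hp⟩, hf⟩
      have heta0 : eta w ≠ 0 := by
        intro h0; apply hf; beta_reduce; rw [h0]; ring
      rw [heta w, claim1 w] at heta0
      have hsum : ∑ e ∈ A.filter (fun e => w.1 ∣ e.1 ∧ w.2 ∣ e.2), lam e / ((e.1 : ℝ) * e.2) ≠ 0 := by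
        intro h0; apply heta0; rw [h0, mul_zero]
      obtain ⟨e, he, hfe⟩ := Finset.exists_ne_zero_of_sum_ne_zero hsum
      obtain ⟨heA, hw1, hw2⟩ := Finset.mem_filter.mp he
      have hl : lam e ≠ 0 := fun h0 => hfe (by rw [h0, zero_div])
      rw [hA, Finset.mem_product]
      exact ⟨Nat.mem_divisors.mpr ⟨hw1.trans (hAdvd e heA).1, hN0⟩,
        Nat.mem_divisors.mpr ⟨hw2.trans (hAdvd e heA).2, hN0⟩⟩
    · rintro ⟨⟨_, hp⟩, hf⟩; exact ⟨hp, hf⟩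
  rw [claim2]
  -- rewrite summand
  have step1 : ∀ w ∈ A.filter (fun w => d₁ ∣ w.1 ∧ d₂ ∣ w.2),
      ((μ (w.1 * w.2) : ℝ)) ^ 2 * eta w / ((Nat.totient w.1 : ℝ) * Nat.totient w.2) =
      if Squarefree (w.1 * w.2) then ((μ w.1 : ℝ) * (μ w.2 : ℝ)) *
        ∑ e ∈ A.filter (fun e => w.1 ∣ e.1 ∧ w.2 ∣ e.2), lam e / ((e.1 : ℝ) * e.2) else 0 := by
    intro w hw
    obtain ⟨hwA, -⟩ := Finset.mem_filter.mp hw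
    rw [hA, Finset.mem_product] at hwA
    have hw1 : w.1 ≠ 0 := (Nat.pos_of_mem_divisors hwA.1).ne'
    have hw2 : w.2 ≠ 0 := (Nat.pos_of_mem_divisors hwA.2).ne'
    have ht1 : (Nat.totient w.1 : ℝ) ≠ 0 := by
      exact_mod_cast (Nat.totient_pos.mpr (Nat.pos_of_ne_zero hw1)).ne'
    have ht2 : (Nat.totient w.2 : ℝ) ≠ 0 := by
      exact_mod_cast (Nat.totient_pos.mpr (Nat.pos_of_ne_zero hw2)).ne'
    rw [heta w, claim1 w]
    by_cases hsf : Squarefree (w.1 * w.2)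
    · rw [if_pos hsf]
      have hmu2 : ((μ (w.1 * w.2) : ℝ)) ^ 2 = 1 := by
        rw [sq]; exact mu_self_mul hsf
      rw [hmu2]
      field_simp
    · rw [if_neg hsf]
      rw [moebius_eq_zero_of_not_squarefree hsf]
      norm_num
  rw [Finset.sum_congr rfl step1, Finset.sum_filter]
  -- expand inner sum and swap
  have step2 : ∀ w : ℕ × ℕ,
      (if d₁ ∣ w.1 ∧ d₂ ∣ w.2 then
        (if Squarefree (w.1 * w.2) then ((μ w.1 : ℝ) * (μ w.2 : ℝ)) *
          ∑ e ∈ A.filter (fun e => w.1 ∣ e.1 ∧ w.2 ∣ e.2), lam e / ((e.1 : ℝ) * e.2) else 0) else 0) =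
      ∑ e ∈ A, (if d₁ ∣ w.1 ∧ d₂ ∣ w.2 then (if Squarefree (w.1 * w.2) then
        (if w.1 ∣ e.1 ∧ w.2 ∣ e.2 then ((μ w.1 : ℝ) * (μ w.2 : ℝ)) * (lam e / ((e.1 : ℝ) * e.2)) else 0)
        else 0) else 0) := by
    intro w
    split_ifs with h1 h2
    · rw [Finset.mul_sum, ← Finset.sum_filter]
    · simp
    · simp
  rw [Finset.sum_congr rfl (fun w _ => step2 w), Finset.sum_comm]
  -- inner sum over w for fixed e
  have step3 : ∀ e ∈ A,
      (∑ w ∈ A, (if d₁ ∣ w.1 ∧ d₂ ∣ w.2 then (if Squarefree (w.1 * w.2) then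
        (if w.1 ∣ e.1 ∧ w.2 ∣ e.2 then ((μ w.1 : ℝ) * (μ w.2 : ℝ)) * (lam e / ((e.1 : ℝ) * e.2)) else 0)
        else 0) else 0)) =
      if e = (d₁, d₂) then ((μ d₁ : ℝ) * (μ d₂ : ℝ)) * (lam e / ((e.1 : ℝ) * e.2)) else 0 := by
    intro e heA
    by_cases hle : lam e = 0
    · simp [hle]
    · have hsfe : Squarefree (e.1 * e.2) := hsupp e hle
      have hsfe1 : Squarefree e.1 := hsfe.squarefree_of_dvd (dvd_mul_right _ _)
      have hsfe2 : Squarefree e.2 := hsfe.squarefree_of_dvd (dvd_mul_left _ _)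
      have hte : ∀ w ∈ A,
          (if d₁ ∣ w.1 ∧ d₂ ∣ w.2 then (if Squarefree (w.1 * w.2) then
            (if w.1 ∣ e.1 ∧ w.2 ∣ e.2 then ((μ w.1 : ℝ) * (μ w.2 : ℝ)) * (lam e / ((e.1 : ℝ) * e.2)) else 0)
            else 0) else 0) =
          (if (d₁ ∣ w.1 ∧ d₂ ∣ w.2) ∧ (w.1 ∣ e.1 ∧ w.2 ∣ e.2) then ((μ w.1 : ℝ) * (μ w.2 : ℝ)) else 0)
            * (lam e / ((e.1 : ℝ) * e.2)) := by
        intro w _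
        by_cases h1 : d₁ ∣ w.1 ∧ d₂ ∣ w.2
        · by_cases h2 : w.1 ∣ e.1 ∧ w.2 ∣ e.2
          · have hsfw : Squarefree (w.1 * w.2) := hsfe.squarefree_of_dvd (mul_dvd_mul h2.1 h2.2)
            simp [h1, h2, hsfw]
          · simp [h1, h2]
        · simp [h1]
      rw [Finset.sum_congr rfl hte, ← Finset.sum_mul, ← Finset.sum_filter]
      have hsplit : A.filter (fun w => (d₁ ∣ w.1 ∧ d₂ ∣ w.2) ∧ (w.1 ∣ e.1 ∧ w.2 ∣ e.2)) =
          (e.1.divisors.filter (d₁ ∣ ·)) ×ˢ (e.2.divisors.filter (d₂ ∣ ·)) := by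
        ext w
        simp only [Finset.mem_filter, Finset.mem_product, hA, Nat.mem_divisors]
        constructor
        · rintro ⟨-, ⟨hq1, hq2⟩, hp1, hp2⟩
          exact ⟨⟨⟨hp1, hsfe1.ne_zero⟩, hq1⟩, ⟨hp2, hsfe2.ne_zero⟩, hq2⟩
        · rintro ⟨⟨⟨hp1, -⟩, hq1⟩, ⟨hp2, -⟩, hq2⟩
          exact ⟨⟨⟨hp1.trans (hAdvd e heA).1, hN0⟩, ⟨hp2.trans (hAdvd e heA).2, hN0⟩⟩,
            ⟨hq1, hq2⟩, hp1, hp2⟩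
      rw [hsplit]
      rw [show (∑ a ∈ (e.1.divisors.filter (d₁ ∣ ·)) ×ˢ (e.2.divisors.filter (d₂ ∣ ·)),
            ((μ a.1 : ℝ) * (μ a.2 : ℝ))) =
          (∑ a ∈ e.1.divisors.filter (d₁ ∣ ·), ((μ a : ℤ) : ℝ)) *
            ∑ b ∈ e.2.divisors.filter (d₂ ∣ ·), ((μ b : ℤ) : ℝ) from by
        rw [Finset.sum_mul_sum]; exact Finset.sum_product _ _ _]
      rw [sum_mu_filter_real hsfe1, sum_mu_filter_real hsfe2]
      by_cases hed : e = (d₁, d₂)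
      · have h1 : e.1 = d₁ := by rw [hed]
        have h2 : e.2 = d₂ := by rw [hed]
        simp [hed, h1, h2]
      · have : ¬(e.1 = d₁ ∧ e.2 = d₂) := by
          intro ⟨h1, h2⟩; exact hed (Prod.ext h1 h2)
        rcases not_and_or.mp this with h | h
        · simp [hed, h]
        · simp [hed, h]
  rw [Finset.sum_congr rfl step3, Finset.sum_ite_eq' A (d₁, d₂), if_pos hdA]
  have m1 : ((μ d₁ : ℤ) : ℝ) * ((μ d₁ : ℤ) : ℝ) = 1 :=
    mu_self_mul (hd.squarefree_of_dvd (dvd_mul_right _ _))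
  have m2 : ((μ d₂ : ℤ) : ℝ) * ((μ d₂ : ℤ) : ℝ) = 1 :=
    mu_self_mul (hd.squarefree_of_dvd (dvd_mul_left _ _))
  have hdd : ((d₁ : ℝ) * d₂) ≠ 0 := by positivity
  have : (μ d₁ : ℝ) * (μ d₂ : ℝ) * d₁ * d₂ *
      ((μ d₁ : ℝ) * (μ d₂ : ℝ) * (lam (d₁, d₂) / (((d₁, d₂).1 : ℝ) * ((d₁, d₂).2 : ℕ)))) =
      (((μ d₁ : ℤ) : ℝ) * ((μ d₁ : ℤ) : ℝ)) * (((μ d₂ : ℤ) : ℝ) * ((μ d₂ : ℤ) : ℝ)) *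
        (((d₁ : ℝ) * d₂) / ((d₁ : ℝ) * d₂)) * lam (d₁, d₂) := by
    ring
  rw [this, m1, m2, div_self hdd]
  ring
end
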